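/- Fix σ > 0 and let U = Xᵀε/n where ε ~ N_n(0, σ²I_n). Suppose that for every u ∈ R^p the functions V(·; β₀, u) and V(·; β̌, u) each have a unique minimizer (which holds when the columns of X are in general position). Let δ̂ = argmin_δ V(δ; β₀, U) and δ* = argmin_δ V(δ; β̌, U*), where U* has the same distribution as U. Assume the fixed vector β̌ satisfies (i) β̌_j = 0 for all j ∉ A₀ and (ii) η := sup_{j∈A₀}|β̌_j − β₀_j|/|β₀_j| < 1, and that inf_{j∈A₀}|β₀_j| > M₁/(r(1 − η)) for some M₁ > 0. Then the conditional law of δ* given {‖δ*‖_∞ < M₁} equals the conditional law of δ̂ given {‖δ̂‖_∞ < M₁}. -/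
import Mathlib


open Matrix MeasureTheory ProbabilityTheory

/-- The localized Lasso criterion `V(δ; b, u)`, where `C = XᵀX/n`. -/
noncomputable def Vfun {n p : ℕ} (X : Matrix (Fin n) (Fin p) ℝ) (w : Fin p → ℝ)
    (lam r : ℝ) (b u δ : Fin p → ℝ) : ℝ :=
  (n / (2 * r ^ 2)) * dotProduct δ (((n : ℝ)⁻¹ • (Xᵀ * X)).mulVec δ)
    - (n / r) * dotProduct δ u
    + n * lam * ∑ j, w j * (|b j + δ j / r| - |b j|)

/-! ### Auxiliary lemmas -/

lemma continuous_Vfun {n p : ℕ} (X : Matrix (Fin n) (Fin p) ℝ) (w : Fin p → ℝ)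
    (lam r : ℝ) (b : Fin p → ℝ) :
    Continuous fun q : (Fin p → ℝ) × (Fin p → ℝ) => Vfun X w lam r b q.1 q.2 := by
  simp only [Vfun, dotProduct, Matrix.mulVec]
  fun_prop

lemma convexOn_finset_sum' {ι E : Type*} [AddCommMonoid E] [Module ℝ E] (t : Finset ι)
    (f : ι → E → ℝ) (h : ∀ i ∈ t, ConvexOn ℝ Set.univ (f i)) :
    ConvexOn ℝ Set.univ (fun x => ∑ i ∈ t, f i x) := by
  classical
  induction t using Finset.induction_on with
  | empty => simpa using convexOn_const 0 convex_univ
  | @insert a s hx ih =>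
      simp only [Finset.sum_insert hx]
      exact (h a (Finset.mem_insert_self a s)).add
        (ih fun i hi => h i (Finset.mem_insert_of_mem hi))

lemma convexOn_sq_linear {E : Type*} [AddCommGroup E] [Module ℝ E] (L : E →ₗ[ℝ] ℝ) :
    ConvexOn ℝ Set.univ (fun x => L x ^ 2) := by
  refine ⟨convex_univ, fun x _ y _ a b ha hb hab => ?_⟩
  simp only [map_add, LinearMap.map_smul, smul_eq_mul]
  nlinarith [sq_nonneg (L x - L y), mul_nonneg ha hb]

lemma convexOn_abs_affine {E : Type*} [AddCommGroup E] [Module ℝ E] (L : E →ₗ[ℝ] ℝ) (c : ℝ) :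
    ConvexOn ℝ Set.univ (fun x => |c + L x|) := by
  refine ⟨convex_univ, fun x _ y _ a b ha hb hab => ?_⟩
  simp only [map_add, LinearMap.map_smul, smul_eq_mul]
  have h : c + (a * L x + b * L y) = a * (c + L x) + b * (c + L y) := by
    linear_combination (-c) * hab
  rw [h]
  exact (abs_add_le _ _).trans (by rw [abs_mul, abs_mul, abs_of_nonneg ha, abs_of_nonneg hb])

lemma dot_quad {n p : ℕ} (X : Matrix (Fin n) (Fin p) ℝ) (δ : Fin p → ℝ) :
    dotProduct δ (((n : ℝ)⁻¹ • (Xᵀ * X)).mulVec δ) = (n : ℝ)⁻¹ * ∑ i, (X.mulVec δ i)^2 := by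
  rw [Matrix.smul_mulVec, dotProduct_smul, ← Matrix.mulVec_mulVec,
    Matrix.dotProduct_mulVec, Matrix.vecMul_transpose]
  simp [dotProduct, sq]

lemma convexOn_Vfun {n p : ℕ} (X : Matrix (Fin n) (Fin p) ℝ) (w : Fin p → ℝ)
    (hw : ∀ j, 0 ≤ w j) (lam : ℝ) (hlam : 0 ≤ lam) (r : ℝ) (b u : Fin p → ℝ) :
    ConvexOn ℝ Set.univ (Vfun X w lam r b u) := by
  have h1 : ConvexOn ℝ Set.univ
      (fun δ : Fin p → ℝ => ((n : ℝ) / (2*r^2) * (n:ℝ)⁻¹) * ∑ i, (X.mulVec δ i)^2) := by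
    have hnn : (0:ℝ) ≤ (n : ℝ) / (2*r^2) * (n:ℝ)⁻¹ := by positivity
    have := ConvexOn.smul hnn (convexOn_finset_sum' (E := Fin p → ℝ) Finset.univ
      (fun i δ => (((LinearMap.proj i).comp X.mulVecLin) δ)^2)
      (fun i _ => convexOn_sq_linear _))
    simpa [smul_eq_mul, Matrix.mulVecLin_apply] using this
  have h2 : ConvexOn ℝ Set.univ (fun δ : Fin p → ℝ => -(((n:ℝ))/r) * dotProduct δ u) := by
    refine ⟨convex_univ, fun x _ y _ a b ha hb hab => le_of_eq ?_⟩
    simp only [add_dotProduct, smul_dotProduct, smul_eq_mul]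
    ring
  have h3 : ConvexOn ℝ Set.univ
      (fun δ : Fin p → ℝ => ((n:ℝ)*lam) * ∑ j, w j * (|b j + δ j / r| - |b j|)) := by
    have hnn : (0:ℝ) ≤ (n:ℝ)*lam := by positivity
    have hj : ∀ j : Fin p, ConvexOn ℝ Set.univ
        (fun δ : Fin p → ℝ => w j * (|b j + δ j / r| - |b j|)) := by
      intro j
      have hc := ((convexOn_abs_affine
        ((r⁻¹ • LinearMap.proj j : (Fin p → ℝ) →ₗ[ℝ] ℝ)) (b j)).add_const (-|b j|)).smul (hw j)
      simpa [LinearMap.smul_apply, LinearMap.proj_apply, smul_eq_mul, inv_mul_eq_div,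
        sub_eq_add_neg] using hc
    have := ConvexOn.smul hnn (convexOn_finset_sum' Finset.univ _ (fun j _ => hj j))
    simpa [smul_eq_mul] using this
  have heq : Vfun X w lam r b u = fun δ =>
      (((n : ℝ) / (2*r^2) * (n:ℝ)⁻¹) * ∑ i, (X.mulVec δ i)^2
        + -(((n:ℝ))/r) * dotProduct δ u)
      + ((n:ℝ)*lam) * ∑ j, w j * (|b j + δ j / r| - |b j|) := by
    funext δ
    simp only [Vfun, dot_quad]
    ring
  rw [heq]
  exact (h1.add h2).add h3

lemma Vfun_eq_on_box {n p : ℕ} (X : Matrix (Fin n) (Fin p) ℝ) (w : Fin p → ℝ)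
    (lam r : ℝ) (hr : 0 < r) (β₀ βc : Fin p → ℝ)
    (hsupp : ∀ j, β₀ j = 0 → βc j = 0)
    (η : ℝ) (hη1 : η < 1)
    (hη : ∀ j, β₀ j ≠ 0 → |βc j - β₀ j| ≤ η * |β₀ j|)
    (M₁ : ℝ)
    (hbetamin : ∀ j, β₀ j ≠ 0 → M₁ / (r * (1 - η)) < |β₀ j|)
    (u δ : Fin p → ℝ) (hbox : ∀ j, |δ j| < M₁) :
    Vfun X w lam r β₀ u δ = Vfun X w lam r βc u δ := by
  have key : ∀ j, |β₀ j + δ j / r| - |β₀ j| = |βc j + δ j / r| - |βc j| := by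
    intro j
    by_cases hj : β₀ j = 0
    · simp [hj, hsupp j hj]
    · have hb := hbetamin j hj
      have h1η : 0 < 1 - η := by linarith
      have hrη : 0 < r * (1 - η) := by positivity
      have ht : |δ j / r| < (1 - η) * |β₀ j| := by
        rw [abs_div, abs_of_pos hr, div_lt_iff₀ hr]
        have h2 := (div_lt_iff₀ hrη).mp hb
        calc |δ j| < M₁ := hbox j
          _ ≤ (1 - η) * |β₀ j| * r := by nlinarith
      have hηβ := hη j hj
      rcases lt_or_gt_of_ne hj with hneg | hpos
      · have h0 : |β₀ j| = -β₀ j := abs_of_neg hneg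
        rw [h0] at ht hηβ
        have h2 := abs_le.mp hηβ
        have ht' := abs_lt.mp ht
        have e1 : β₀ j + δ j / r < 0 := by nlinarith
        have e3 : βc j < 0 := by nlinarith
        have e2 : βc j + δ j / r < 0 := by nlinarith
        rw [abs_of_neg e1, abs_of_neg hneg, abs_of_neg e2, abs_of_neg e3]
        ring
      · have h0 : |β₀ j| = β₀ j := abs_of_pos hpos
        rw [h0] at ht hηβ
        have h2 := abs_le.mp hηβ
        have ht' := abs_lt.mp ht
        have e1 : 0 < β₀ j + δ j / r := by nlinarith
        have e3 : 0 < βc j := by nlinarith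
        have e2 : 0 < βc j + δ j / r := by nlinarith
        rw [abs_of_pos e1, abs_of_pos hpos, abs_of_pos e2, abs_of_pos e3]
        ring
  have hS : ∑ j, w j * (|β₀ j + δ j / r| - |β₀ j|) = ∑ j, w j * (|βc j + δ j / r| - |βc j|) :=
    Finset.sum_congr rfl fun j _ => by rw [key j]
  unfold Vfun
  rw [hS]

lemma isOpen_box {p : ℕ} (M₁ : ℝ) : IsOpen {δ : Fin p → ℝ | ∀ j, |δ j| < M₁} := by
  have h : {δ : Fin p → ℝ | ∀ j, |δ j| < M₁}
      = ⋂ j, (fun δ : Fin p → ℝ => δ j) ⁻¹' (Set.Ioo (-M₁) M₁) := by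
    ext δ; simp [abs_lt]
  rw [h]
  exact isOpen_iInter_of_finite fun j => isOpen_Ioo.preimage (continuous_apply j)

lemma min_swap {p : ℕ} (V₁ V₂ : (Fin p → ℝ) → ℝ) (hconv2 : ConvexOn ℝ Set.univ V₂)
    (M₁ : ℝ) (heq : ∀ δ, (∀ j, |δ j| < M₁) → V₁ δ = V₂ δ)
    (δ₀ : Fin p → ℝ) (hmin : ∀ δ', V₁ δ₀ ≤ V₁ δ') (hbox : ∀ j, |δ₀ j| < M₁) :
    ∀ δ', V₂ δ₀ ≤ V₂ δ' := by
  have hmem : {δ : Fin p → ℝ | ∀ j, |δ j| < M₁} ∈ nhdsWithin δ₀ Set.univ := by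
    rw [nhdsWithin_univ]; exact (isOpen_box M₁).mem_nhds hbox
  have hloc : IsLocalMinOn V₂ Set.univ δ₀ :=
    Filter.eventually_of_mem hmem fun x hx => by
      rw [← heq x hx, ← heq δ₀ hbox]; exact hmin x
  have hglob := IsMinOn.of_isLocalMinOn_of_convexOn (Set.mem_univ δ₀) hloc hconv2
  exact fun δ' => isMinOn_iff.mp hglob δ' (Set.mem_univ δ')

lemma measurable_argmin {p : ℕ} (V : (Fin p → ℝ) → (Fin p → ℝ) → ℝ)
    (hcont : Continuous fun q : (Fin p → ℝ) × (Fin p → ℝ) => V q.1 q.2)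
    (F : (Fin p → ℝ) → (Fin p → ℝ))
    (hF : ∀ u δ', V u (F u) ≤ V u δ')
    (huniq : ∀ u δ, (∀ δ', V u δ ≤ V u δ') → δ = F u) :
    Measurable F := by
  set Gr : Set ((Fin p → ℝ) × (Fin p → ℝ)) := {q | ∀ δ', V q.1 q.2 ≤ V q.1 δ'} with hGrdef
  have hGr : IsClosed Gr := by
    have h : Gr = ⋂ δ', {q : (Fin p → ℝ) × (Fin p → ℝ) | V q.1 q.2 ≤ V q.1 δ'} := by
      ext q; simp [hGrdef, Set.mem_iInter]
    rw [h]
    exact isClosed_iInter fun δ' =>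
      isClosed_le hcont (hcont.comp (continuous_fst.prodMk continuous_const))
  have hK : ∀ K : Set (Fin p → ℝ), IsCompact K → IsClosed (F ⁻¹' K) := by
    intro K hKc
    refine IsSeqClosed.isClosed ?_
    intro x l hx hlim
    obtain ⟨δ, hδK, φ, hφmono, hφtend⟩ := hKc.tendsto_subseq (fun k => hx k)
    have htend : Filter.Tendsto (fun k => (x (φ k), F (x (φ k)))) Filter.atTop (nhds (l, δ)) :=
      (hlim.comp hφmono.tendsto_atTop).prodMk_nhds hφtend
    have hmem : (l, δ) ∈ Gr :=
      hGr.mem_of_tendsto htend (Filter.Eventually.of_forall fun k => fun δ' => hF _ δ')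
    have hδl : δ = F l := huniq l δ hmem
    exact Set.mem_preimage.mpr (hδl ▸ hδK)
  apply measurable_of_isClosed
  intro s hs
  have hcover : F ⁻¹' s = ⋃ m : ℕ, F ⁻¹' (s ∩ Metric.closedBall 0 m) := by
    ext u
    simp only [Set.mem_preimage, Set.mem_iUnion, Set.mem_inter_iff, Metric.mem_closedBall,
      dist_zero_right]
    constructor
    · intro h
      obtain ⟨m, hm⟩ := exists_nat_ge ‖F u‖
      exact ⟨m, h, hm⟩
    · rintro ⟨m, h, -⟩; exact h
  rw [hcover]
  exact MeasurableSet.iUnion fun m =>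
    (hK _ ((isCompact_closedBall 0 m).inter_left hs)).measurableSet

/-! ### Main theorem -/

/-- With `δ̂ = argmin V(·; β₀, U)` and `δ* = argmin V(·; β̌, U*)`, where `U* ≍ U = Xᵀε/n`
and `ε ~ N(0, σ²I)`, under conditions (i), (ii) and the beta-min condition, the conditional
law of `δ*` given `{‖δ*‖_∞ < M₁}` equals the conditional law of `δ̂` given `{‖δ̂‖_∞ < M₁}`. -/
theorem conditional_law_eq_of_thresholded {n p : ℕ}
    (X : Matrix (Fin n) (Fin p) ℝ) (w : Fin p → ℝ) (hw : ∀ j, 0 < w j)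
    (lam : ℝ) (hlam : 0 < lam) (r : ℝ) (hr : 0 < r)
    (σ : ℝ) (hσ : 0 < σ)
    (β₀ βc : Fin p → ℝ)
    (hsupp : ∀ j, β₀ j = 0 → βc j = 0)
    (η : ℝ) (hη0 : 0 ≤ η) (hη1 : η < 1)
    (hη : ∀ j, β₀ j ≠ 0 → |βc j - β₀ j| ≤ η * |β₀ j|)
    (M₁ : ℝ) (hM₁ : 0 < M₁)
    (hbetamin : ∀ j, β₀ j ≠ 0 → M₁ / (r * (1 - η)) < |β₀ j|)
    -- unique minimizers (columns of X in general position)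
    (huniq : ∀ b u : Fin p → ℝ, ∃! δ : Fin p → ℝ,
      ∀ δ', Vfun X w lam r b u δ ≤ Vfun X w lam r b u δ')
    -- probability space carrying U and U*
    (Ω : Type*) [MeasurableSpace Ω] (Pr : Measure Ω) [IsProbabilityMeasure Pr]
    (U Ustar : Ω → Fin p → ℝ) (hU : Measurable U) (hUstar : Measurable Ustar)
    (hlawU : Measure.map U Pr =
      Measure.map (fun e : Fin n → ℝ => fun j => (n : ℝ)⁻¹ * Xᵀ.mulVec e j)
        (Measure.pi fun _ : Fin n => gaussianReal 0 ⟨σ ^ 2, sq_nonneg σ⟩))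
    (hsamelaw : Measure.map Ustar Pr = Measure.map U Pr)
    -- the two minimizers
    (δhat δstar : Ω → Fin p → ℝ)
    (hδhat : ∀ ω δ, Vfun X w lam r β₀ (U ω) (δhat ω) ≤ Vfun X w lam r β₀ (U ω) δ)
    (hδstar : ∀ ω δ, Vfun X w lam r βc (Ustar ω) (δstar ω) ≤ Vfun X w lam r βc (Ustar ω) δ) :
    ∀ B : Set (Fin p → ℝ), MeasurableSet B →
      (Pr ({ω | δstar ω ∈ B} ∩ {ω | ∀ j, |δstar ω j| < M₁})).toReal /
          (Pr {ω | ∀ j, |δstar ω j| < M₁}).toReal =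
      (Pr ({ω | δhat ω ∈ B} ∩ {ω | ∀ j, |δhat ω j| < M₁})).toReal /
          (Pr {ω | ∀ j, |δhat ω j| < M₁}).toReal := by
  intro B hB
  classical
  -- the measurable selection of the unique minimizer for the `β₀` problem
  set F : (Fin p → ℝ) → (Fin p → ℝ) := fun u => (huniq β₀ u).choose with hFdef
  have hFmin : ∀ u δ', Vfun X w lam r β₀ u (F u) ≤ Vfun X w lam r β₀ u δ' :=
    fun u => (huniq β₀ u).choose_spec.1
  have hFuniq : ∀ u δ, (∀ δ', Vfun X w lam r β₀ u δ ≤ Vfun X w lam r β₀ u δ') → δ = F u :=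
    fun u δ h => (huniq β₀ u).choose_spec.2 δ h
  have hFmeas : Measurable F :=
    measurable_argmin _ (continuous_Vfun X w lam r β₀) F hFmin hFuniq
  set box : Set (Fin p → ℝ) := {δ | ∀ j, |δ j| < M₁} with hboxdef
  have hboxmeas : MeasurableSet box := (isOpen_box M₁).measurableSet
  have hVeq : ∀ u δ, (∀ j, |δ j| < M₁) →
      Vfun X w lam r β₀ u δ = Vfun X w lam r βc u δ :=
    fun u δ h => Vfun_eq_on_box X w lam r hr β₀ βc hsupp η hη1 hη M₁ hbetamin u δ h
  have hconv0 : ∀ u, ConvexOn ℝ Set.univ (Vfun X w lam r β₀ u) :=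
    fun u => convexOn_Vfun X w (fun j => (hw j).le) lam hlam.le r β₀ u
  have hconvc : ∀ u, ConvexOn ℝ Set.univ (Vfun X w lam r βc u) :=
    fun u => convexOn_Vfun X w (fun j => (hw j).le) lam hlam.le r βc u
  -- the key events rewrite as preimages through the common selection F
  have hstar : ∀ S : Set (Fin p → ℝ),
      {ω | δstar ω ∈ S} ∩ {ω | ∀ j, |δstar ω j| < M₁} = Ustar ⁻¹' (F ⁻¹' (S ∩ box)) := by
    intro S
    ext ω
    simp only [Set.mem_inter_iff, Set.mem_setOf_eq, Set.mem_preimage, hboxdef]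
    constructor
    · rintro ⟨hmem, hbox⟩
      have h1 : ∀ δ', Vfun X w lam r β₀ (Ustar ω) (δstar ω) ≤ Vfun X w lam r β₀ (Ustar ω) δ' :=
        min_swap (Vfun X w lam r βc (Ustar ω)) (Vfun X w lam r β₀ (Ustar ω)) (hconv0 _) M₁
          (fun δ h => (hVeq _ δ h).symm) (δstar ω) (hδstar ω) hbox
      have h2 : δstar ω = F (Ustar ω) := hFuniq _ _ h1
      rw [← h2]; exact ⟨hmem, hbox⟩
    · rintro ⟨hmem, hbox⟩
      have h1 : ∀ δ', Vfun X w lam r βc (Ustar ω) (F (Ustar ω))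
          ≤ Vfun X w lam r βc (Ustar ω) δ' :=
        min_swap (Vfun X w lam r β₀ (Ustar ω)) (Vfun X w lam r βc (Ustar ω)) (hconvc _) M₁
          (hVeq _) (F (Ustar ω)) (hFmin _) hbox
      obtain ⟨d, hd, hun⟩ := huniq βc (Ustar ω)
      have e1 := hun _ h1
      have e2 := hun _ (hδstar ω)
      rw [e2, ← e1]
      exact ⟨hmem, hbox⟩
  have hhat : ∀ S : Set (Fin p → ℝ),
      {ω | δhat ω ∈ S} ∩ {ω | ∀ j, |δhat ω j| < M₁} = U ⁻¹' (F ⁻¹' (S ∩ box)) := by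
    intro S
    ext ω
    have h2 : δhat ω = F (U ω) := hFuniq _ _ (hδhat ω)
    simp only [Set.mem_inter_iff, Set.mem_setOf_eq, Set.mem_preimage, hboxdef, h2]
  -- transfer of measures along the equal laws
  have hT : ∀ S : Set (Fin p → ℝ), MeasurableSet S →
      Pr (Ustar ⁻¹' (F ⁻¹' S)) = Pr (U ⁻¹' (F ⁻¹' S)) := by
    intro S hS
    have h1 : Pr (Ustar ⁻¹' (F ⁻¹' S)) = Measure.map Ustar Pr (F ⁻¹' S) :=
      (Measure.map_apply hUstar (hFmeas hS)).symm
    rw [h1, hsamelaw, Measure.map_apply hU (hFmeas hS)]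
  have hnum : Pr ({ω | δstar ω ∈ B} ∩ {ω | ∀ j, |δstar ω j| < M₁})
      = Pr ({ω | δhat ω ∈ B} ∩ {ω | ∀ j, |δhat ω j| < M₁}) := by
    rw [hstar B, hhat B]
    exact hT _ (hB.inter hboxmeas)
  have hden : Pr {ω | ∀ j, |δstar ω j| < M₁} = Pr {ω | ∀ j, |δhat ω j| < M₁} := by
    have h1 := hstar Set.univ
    have h2 := hhat Set.univ
    simp only [Set.mem_univ, Set.setOf_true, Set.univ_inter] at h1 h2
    rw [h1, h2]
    exact hT _ hboxmeas
  rw [hnum, hden]
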